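/- Let φ : ℝ → ℝ be nonnegative and H-smooth (its derivative is H-Lipschitz). Then for all x, z ∈ ℝ, |φ(x) − φ(z)| ≤ √(6H·(φ(x) + φ(z)))·|x − z|. -/

import Mathlib

theorem stmt_4 (φ : ℝ → ℝ) (H : ℝ)
    (hdiff : Differentiable ℝ φ)
    (hnn : ∀ t, 0 ≤ φ t)
    (hLip : ∀ s t : ℝ, |deriv φ s - deriv φ t| ≤ H * |s - t|) :
    ∀ x z : ℝ, |φ x - φ z| ≤ Real.sqrt (6 * H * (φ x + φ z)) * |x - z| := by
  have descent : ∀ a b : ℝ, |φ b - φ a - deriv φ a * (b - a)| ≤ H / 2 * (b - a) ^ 2 := by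
    have hH0 : 0 ≤ H := by
      have h := hLip 0 1
      simp at h
      linarith [abs_nonneg (deriv φ 0 - deriv φ 1)]
    have hcont : Continuous (deriv φ) := by
      have hl : LipschitzWith (Real.toNNReal H) (deriv φ) :=
        LipschitzWith.of_dist_le_mul fun s t => by
          simpa [Real.dist_eq, Real.coe_toNNReal H hH0] using hLip s t
      exact hl.continuous
    have hint : ∀ a b : ℝ, IntervalIntegrable (deriv φ) MeasureTheory.volume a b :=
      fun a b => hcont.intervalIntegrable a b
    have ftc : ∀ a b : ℝ, (∫ t in a..b, deriv φ t) = φ b - φ a := fun a b =>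
      intervalIntegral.integral_deriv_eq_sub (fun t _ => hdiff t) (hint a b)
    have key : ∀ a b : ℝ, φ b - φ a - deriv φ a * (b - a)
        = ∫ t in a..b, (deriv φ t - deriv φ a) := by
      intro a b
      rw [intervalIntegral.integral_sub (hint a b) intervalIntegrable_const, ftc,
        intervalIntegral.integral_const, smul_eq_mul]
      ring
    intro a b
    rw [key]
    rcases le_total a b with hab | hab
    · calc |∫ t in a..b, (deriv φ t - deriv φ a)|
          ≤ ∫ t in a..b, |deriv φ t - deriv φ a| := by
            simpa [Real.norm_eq_abs] using
              intervalIntegral.norm_integral_le_integral_norm (f := fun t => deriv φ t - deriv φ a) hab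
        _ ≤ ∫ t in a..b, H * (t - a) := by
            apply intervalIntegral.integral_mono_on hab
            · exact ((hcont.sub continuous_const).abs).intervalIntegrable a b
            · exact ((continuous_const.mul (continuous_id.sub continuous_const))).intervalIntegrable a b
            · intro t ht
              have := hLip t a
              rwa [abs_of_nonneg (by linarith [ht.1] : (0:ℝ) ≤ t - a)] at this
        _ = H / 2 * (b - a) ^ 2 := by
            rw [intervalIntegral.integral_const_mul,
              intervalIntegral.integral_comp_sub_right (fun x => x) a, integral_id]
            ring
    · rw [intervalIntegral.integral_symm, abs_neg]
      calc |∫ t in b..a, (deriv φ t - deriv φ a)|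
          ≤ ∫ t in b..a, |deriv φ t - deriv φ a| := by
            simpa [Real.norm_eq_abs] using
              intervalIntegral.norm_integral_le_integral_norm (f := fun t => deriv φ t - deriv φ a) hab
        _ ≤ ∫ t in b..a, H * (a - t) := by
            apply intervalIntegral.integral_mono_on hab
            · exact ((hcont.sub continuous_const).abs).intervalIntegrable b a
            · exact ((continuous_const.mul (continuous_const.sub continuous_id))).intervalIntegrable b a
            · intro t ht
              have h := hLip t a
              rw [abs_of_nonpos (by linarith [ht.2] : t - a ≤ 0)] at h
              linarith
        _ = H / 2 * (b - a) ^ 2 := by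
            rw [intervalIntegral.integral_const_mul,
              intervalIntegral.integral_comp_sub_left (fun x => x) a, integral_id]
            ring
  have hH0 : 0 ≤ H := by
    have h := hLip 0 1
    simp at h
    linarith [abs_nonneg (deriv φ 0 - deriv φ 1)]
  -- self-bounding property
  have sb : ∀ t : ℝ, (deriv φ t) ^ 2 ≤ 2 * H * φ t := by
    intro t
    set d := deriv φ t with hd
    have quad : ∀ s : ℝ, 0 ≤ φ t + d * s + H / 2 * s ^ 2 := by
      intro s
      have h1 := descent t (t + s)
      have h2 := hnn (t + s)
      have h3 := abs_le.1 h1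
      have := h3.1
      simp only [add_sub_cancel_left] at this h3 ⊢
      nlinarith [h3.1]
    rcases eq_or_lt_of_le hH0 with hH | hH
    · have hd0 : d = 0 := by
        by_contra hne
        have h := quad (-(φ t + 1) / d)
        rw [← hH] at h
        field_simp at h
        have hd2 : 0 < d ^ 2 := lt_of_le_of_ne (sq_nonneg d) (Ne.symm (pow_ne_zero 2 hne))
        rw [le_div_iff₀ hd2] at h
        nlinarith [hnn t]
      rw [hd0, ← hH]; nlinarith [hnn t]
    · have h := quad (-d / H)
      have h2 : φ t + d * (-d / H) + H / 2 * (-d / H) ^ 2 = φ t - d ^ 2 / (2 * H) := by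
        field_simp; ring
      rw [h2, sub_nonneg, div_le_iff₀ (by positivity)] at h
      nlinarith
  intro x z
  set S := Real.sqrt (H * (φ x + φ z)) with hS
  clear_value S
  have hS2 : S ^ 2 = H * (φ x + φ z) := by
    rw [hS]; exact Real.sq_sqrt (mul_nonneg hH0 (by linarith [hnn x, hnn z]))
  have hSnn : 0 ≤ S := by rw [hS]; exact Real.sqrt_nonneg _
  have hgoal_eq : Real.sqrt (6 * H * (φ x + φ z)) = Real.sqrt 6 * S := by
    rw [hS, ← Real.sqrt_mul (by norm_num : (0:ℝ) ≤ 6), mul_assoc]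
  rw [hgoal_eq]
  have h6 : Real.sqrt 6 ^ 2 = 6 := Real.sq_sqrt (by norm_num)
  have h6nn : 0 ≤ Real.sqrt 6 := Real.sqrt_nonneg _
  set L := |x - z| with hL
  clear_value L
  have hLnn : 0 ≤ L := by rw [hL]; exact abs_nonneg _
  rcases le_total (H * L ^ 2) (φ x + φ z) with hcase | hcase
  · -- case 1
    have hdz : |deriv φ z| ≤ Real.sqrt 2 * S := by
      have h1 : (deriv φ z) ^ 2 ≤ 2 * H * φ z := sb z
      have h2 : (deriv φ z) ^ 2 ≤ (Real.sqrt 2 * S) ^ 2 := by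
        rw [mul_pow, Real.sq_sqrt (by norm_num : (0:ℝ) ≤ 2), hS2]
        nlinarith [hnn x, hH0]
      calc |deriv φ z| = Real.sqrt ((deriv φ z) ^ 2) := (Real.sqrt_sq_eq_abs _).symm
        _ ≤ Real.sqrt ((Real.sqrt 2 * S) ^ 2) := Real.sqrt_le_sqrt h2
        _ = Real.sqrt 2 * S := Real.sqrt_sq (by positivity)
    have hHL : Real.sqrt H * L ≤ Real.sqrt (φ x + φ z) := by
      have : Real.sqrt (H * L ^ 2) ≤ Real.sqrt (φ x + φ z) := Real.sqrt_le_sqrt hcase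
      rwa [Real.sqrt_mul hH0, Real.sqrt_sq_eq_abs, abs_of_nonneg hLnn] at this
    have hSsplit : Real.sqrt H * Real.sqrt (φ x + φ z) = S := by
      rw [hS, Real.sqrt_mul hH0]
    have hquad : H / 2 * L ^ 2 ≤ 1 / 2 * (S * L) := by
      have e1 : H / 2 * L ^ 2 = 1 / 2 * ((Real.sqrt H * L) * (Real.sqrt H * L)) := by
        rw [show Real.sqrt H * L * (Real.sqrt H * L) = Real.sqrt H * Real.sqrt H * L ^ 2 by ring,
          Real.mul_self_sqrt hH0]
        ring
      rw [e1, ← hSsplit]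
      have := mul_le_mul_of_nonneg_right hHL (by positivity : 0 ≤ Real.sqrt H * L)
      nlinarith [Real.sqrt_nonneg H, Real.sqrt_nonneg (φ x + φ z)]
    have htri : |φ x - φ z| ≤ |deriv φ z| * L + H / 2 * L ^ 2 := by
      have h1 := descent z x
      have h2 : |φ x - φ z| ≤ |φ x - φ z - deriv φ z * (x - z)| + |deriv φ z * (x - z)| := by
        calc |φ x - φ z| = |(φ x - φ z - deriv φ z * (x - z)) + deriv φ z * (x - z)| := by ring_nf
          _ ≤ _ := abs_add_le _ _
      rw [abs_mul, ← hL] at h2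
      have hL2 : (x - z) ^ 2 = L ^ 2 := by rw [hL, sq_abs]
      calc |φ x - φ z| ≤ |φ x - φ z - deriv φ z * (x - z)| + |deriv φ z| * L := h2
        _ ≤ H / 2 * (x - z) ^ 2 + |deriv φ z| * L := by linarith
        _ = |deriv φ z| * L + H / 2 * L ^ 2 := by rw [hL2]; ring
    have hsum : |deriv φ z| * L + H / 2 * L ^ 2 ≤ (Real.sqrt 2 + 1 / 2) * (S * L) := by
      have := mul_le_mul_of_nonneg_right hdz hLnn
      nlinarith
    have h2le : Real.sqrt 2 ≤ 1.415 := by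
      nlinarith [Real.sq_sqrt (show (0:ℝ) ≤ 2 by norm_num), Real.sqrt_nonneg 2,
        sq_nonneg (Real.sqrt 2 - 1.415)]
    have h6ge : (2.4:ℝ) ≤ Real.sqrt 6 := by
      nlinarith [h6, h6nn]
    have hnum : Real.sqrt 2 + 1 / 2 ≤ Real.sqrt 6 := by linarith
    calc |φ x - φ z| ≤ (Real.sqrt 2 + 1 / 2) * (S * L) := le_trans htri hsum
      _ ≤ Real.sqrt 6 * (S * L) := by
          apply mul_le_mul_of_nonneg_right hnum (mul_nonneg hSnn hLnn)
      _ = Real.sqrt 6 * S * L := by ring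
  · -- case 2
    have h1 : |φ x - φ z| ≤ φ x + φ z :=
      abs_sub_le_iff.2 ⟨by linarith [hnn x, hnn z], by linarith [hnn x, hnn z]⟩
    have h2 : (φ x + φ z) ^ 2 ≤ (S * L) ^ 2 := by
      rw [mul_pow, hS2]
      nlinarith [hnn x, hnn z]
    have h3 : φ x + φ z ≤ S * L := by
      have hb : 0 ≤ S * L := mul_nonneg hSnn hLnn
      nlinarith [h2, hb, hnn x, hnn z]
    have h16 : (1:ℝ) ≤ Real.sqrt 6 := by
      rw [show (1:ℝ) = Real.sqrt 1 from Real.sqrt_one.symm]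
      exact Real.sqrt_le_sqrt (by norm_num)
    calc |φ x - φ z| ≤ S * L := le_trans h1 h3
      _ ≤ Real.sqrt 6 * (S * L) := le_mul_of_one_le_left (mul_nonneg hSnn hLnn) h16
      _ = Real.sqrt 6 * S * L := by ring
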